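/- Every element in the image of the Magnus representation φ of the free metabelian group M_n is a matrix of the form [[S, Σ_i γ_i t_i],[0,1]], where S = s_1^{j_1}⋯s_n^{j_n} is a Laurent monomial with integer exponents and γ_1,…,γ_n are elements of the Laurent polynomial ring ℤ[s_1^{±1},…,s_n^{±1}] satisfying Σ_i γ_i(1 − s_i) = 1 − S. -/

import Mathlib

open MvPolynomial

abbrev LaurentRing (n : ℕ) := AddMonoidAlgebra ℤ (Fin n →₀ ℤ)

noncomputable def sVar (n : ℕ) (i : Fin n) : LaurentRing n :=
  AddMonoidAlgebra.single (Finsupp.single i 1) 1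

noncomputable def sVarInv (n : ℕ) (i : Fin n) : LaurentRing n :=
  AddMonoidAlgebra.single (-Finsupp.single i 1) 1

lemma sVar_mul_sVarInv (n : ℕ) (i : Fin n) : sVar n i * sVarInv n i = 1 := by
  rw [sVar, sVarInv, AddMonoidAlgebra.single_mul_single, add_neg_cancel, one_mul,
    AddMonoidAlgebra.one_def]

abbrev MagnusRing (n : ℕ) := MvPolynomial (Fin n) (LaurentRing n)

noncomputable def magnusUnit (n : ℕ) (i : Fin n) : (Matrix (Fin 2) (Fin 2) (MagnusRing n))ˣ where
  val := !![C (sVar n i), X i; 0, 1]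
  inv := !![C (sVarInv n i), -(C (sVarInv n i) * X i); 0, 1]
  val_inv := by
    have h : (C (sVar n i) * C (sVarInv n i) : MagnusRing n) = 1 := by
      rw [← map_mul, sVar_mul_sVarInv, map_one]
    rw [Matrix.mul_fin_two, Matrix.one_fin_two]
    have e00 : (C (sVar n i) * C (sVarInv n i) + X i * 0 : MagnusRing n) = 1 := by
      linear_combination h
    have e01 : (C (sVar n i) * -(C (sVarInv n i) * X i) + X i * 1 : MagnusRing n) = 0 := by
      linear_combination (-(X i) : MagnusRing n) * h
    rw [e00, e01]
    norm_num
  inv_val := by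
    have h : (C (sVarInv n i) * C (sVar n i) : MagnusRing n) = 1 := by
      rw [← map_mul, mul_comm, sVar_mul_sVarInv, map_one]
    rw [Matrix.mul_fin_two, Matrix.one_fin_two]
    have e00 : (C (sVarInv n i) * C (sVar n i) + -(C (sVarInv n i) * X i) * 0 :
        MagnusRing n) = 1 := by
      linear_combination h
    have e01 : (C (sVarInv n i) * X i + -(C (sVarInv n i) * X i) * 1 : MagnusRing n) = 0 := by
      ring
    rw [e00, e01]
    norm_num

section lowerTriv
open scoped commutatorElement
variable {R : Type*} [CommRing R]

def lowerTriv (R : Type*) [CommRing R] : Subgroup (Matrix (Fin 2) (Fin 2) R)ˣ where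
  carrier := {A | A.val 1 0 = 0 ∧ A.val 1 1 = 1}
  one_mem' := ⟨by simp, by simp⟩
  mul_mem' := by
    rintro A B ⟨ha0, ha1⟩ ⟨hb0, hb1⟩
    constructor <;>
      simp [Units.val_mul, Matrix.mul_apply, Fin.sum_univ_two, ha0, ha1, hb0, hb1]
  inv_mem' := by
    rintro A ⟨h0, h1⟩
    have key : ∀ j, A.inv 1 j = (1 : Matrix (Fin 2) (Fin 2) R) 1 j := by
      intro j
      have h : (A.val * A.inv) 1 j = (1 : Matrix (Fin 2) (Fin 2) R) 1 j := by
        rw [A.val_inv]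
      rwa [Matrix.mul_apply, Fin.sum_univ_two, h0, h1, zero_mul, one_mul, zero_add] at h
    exact ⟨by simpa using key 0, by simpa using key 1⟩

lemma mem_lowerTriv {A : (Matrix (Fin 2) (Fin 2) R)ˣ} :
    A ∈ lowerTriv R ↔ A.val 1 0 = 0 ∧ A.val 1 1 = 1 := Iff.rfl

lemma lowerTriv_mul_apply_zero_zero {A B : (Matrix (Fin 2) (Fin 2) R)ˣ}
    (hB : B ∈ lowerTriv R) :
    (A * B).val 0 0 = A.val 0 0 * B.val 0 0 := by
  obtain ⟨hb0, -⟩ := mem_lowerTriv.mp hB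
  simp [Units.val_mul, Matrix.mul_apply, Fin.sum_univ_two, hb0]

lemma lowerTriv_inv_zero_zero {A : (Matrix (Fin 2) (Fin 2) R)ˣ}
    (hA : A ∈ lowerTriv R) :
    A.val 0 0 * (A⁻¹).val 0 0 = 1 := by
  have h := lowerTriv_mul_apply_zero_zero (A := A) (B := A⁻¹) ((lowerTriv R).inv_mem hA)
  rw [mul_inv_cancel] at h
  simpa using h.symm

def upperUni (R : Type*) [CommRing R] : Subgroup (Matrix (Fin 2) (Fin 2) R)ˣ where
  carrier := {A | A.val 0 0 = 1 ∧ A.val 1 0 = 0 ∧ A.val 1 1 = 1}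
  one_mem' := ⟨by simp, by simp, by simp⟩
  mul_mem' := by
    rintro A B ⟨ha, ha0, ha1⟩ ⟨hb, hb0, hb1⟩
    refine ⟨?_, ?_, ?_⟩ <;>
      simp [Units.val_mul, Matrix.mul_apply, Fin.sum_univ_two, ha, ha0, ha1, hb, hb0, hb1]
  inv_mem' := by
    rintro A ⟨ha, ha0, ha1⟩
    have hmem : A ∈ lowerTriv R := ⟨ha0, ha1⟩
    obtain ⟨h0, h1⟩ := mem_lowerTriv.mp ((lowerTriv R).inv_mem hmem)
    have h := lowerTriv_inv_zero_zero hmem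
    rw [ha, one_mul] at h
    exact ⟨h, h0, h1⟩

lemma mem_upperUni {A : (Matrix (Fin 2) (Fin 2) R)ˣ} :
    A ∈ upperUni R ↔ A.val 0 0 = 1 ∧ A.val 1 0 = 0 ∧ A.val 1 1 = 1 := Iff.rfl

lemma upperUni_comm {A B : (Matrix (Fin 2) (Fin 2) R)ˣ}
    (hA : A ∈ upperUni R) (hB : B ∈ upperUni R) : A * B = B * A := by
  obtain ⟨ha, ha0, ha1⟩ := mem_upperUni.mp hA
  obtain ⟨hb, hb0, hb1⟩ := mem_upperUni.mp hB
  ext : 1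
  rw [Units.val_mul, Units.val_mul, Matrix.eta_fin_two A.val, Matrix.eta_fin_two B.val,
    ha, ha0, ha1, hb, hb0, hb1, Matrix.mul_fin_two, Matrix.mul_fin_two]
  ring_nf

lemma commutator_mem_upperUni {A B : (Matrix (Fin 2) (Fin 2) R)ˣ}
    (hA : A ∈ lowerTriv R) (hB : B ∈ lowerTriv R) : ⁅A, B⁆ ∈ upperUni R := by
  have hAi := (lowerTriv R).inv_mem hA
  have hBi := (lowerTriv R).inv_mem hB
  have hmem : ⁅A, B⁆ ∈ lowerTriv R :=
    Subgroup.mul_mem _ (Subgroup.mul_mem _ (Subgroup.mul_mem _ hA hB) hAi) hBi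
  obtain ⟨hc0, hc1⟩ := mem_lowerTriv.mp hmem
  refine mem_upperUni.mpr ⟨?_, hc0, hc1⟩
  show (A * B * A⁻¹ * B⁻¹).val 0 0 = 1
  rw [lowerTriv_mul_apply_zero_zero hBi, lowerTriv_mul_apply_zero_zero hAi,
    lowerTriv_mul_apply_zero_zero hB]
  have h1 := lowerTriv_inv_zero_zero hA
  have h2 := lowerTriv_inv_zero_zero hB
  calc A.val 0 0 * B.val 0 0 * (A⁻¹).val 0 0 * (B⁻¹).val 0 0
      = (A.val 0 0 * (A⁻¹).val 0 0) * (B.val 0 0 * (B⁻¹).val 0 0) := by ring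
    _ = 1 := by rw [h1, h2, one_mul]

lemma derivedSeries_two_map_eq_one {G : Type*} [Group G]
    (f : G →* (Matrix (Fin 2) (Fin 2) R)ˣ) (hf : ∀ g, f g ∈ lowerTriv R) :
    ∀ x ∈ derivedSeries G 2, f x = 1 := by
  have h1 : derivedSeries G 1 ≤ (upperUni R).comap f := by
    have e : derivedSeries G 1 = ⁅derivedSeries G 0, derivedSeries G 0⁆ :=
      derivedSeries_succ G 0
    rw [e, Subgroup.commutator_le]
    intro g _ h _
    simp only [Subgroup.mem_comap, map_commutatorElement]
    exact commutator_mem_upperUni (hf g) (hf h)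
  have h2 : derivedSeries G 2 ≤ f.ker := by
    have e : derivedSeries G 2 = ⁅derivedSeries G 1, derivedSeries G 1⁆ :=
      derivedSeries_succ G 1
    rw [e, Subgroup.commutator_le]
    intro g hg h hh
    rw [MonoidHom.mem_ker, map_commutatorElement, commutatorElement_eq_one_iff_mul_comm]
    exact upperUni_comm (h1 hg) (h1 hh)
  exact fun x hx => h2 hx

end lowerTriv

abbrev FreeMetabelian (n : ℕ) :=
  FreeGroup (Fin n) ⧸ derivedSeries (FreeGroup (Fin n)) 2

instance (n : ℕ) : (derivedSeries (FreeGroup (Fin n)) 2).Normal :=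
  derivedSeries_normal _ _

def gen (n : ℕ) (i : Fin n) : FreeMetabelian n :=
  QuotientGroup.mk (FreeGroup.of i)

/-- The Magnus representation on the free group. -/
noncomputable def magnusFree (n : ℕ) :
    FreeGroup (Fin n) →* (Matrix (Fin 2) (Fin 2) (MagnusRing n))ˣ :=
  FreeGroup.lift (magnusUnit n)

lemma magnusFree_mem_lowerTriv (n : ℕ) (g : FreeGroup (Fin n)) :
    magnusFree n g ∈ lowerTriv (MagnusRing n) := by
  refine FreeGroup.range_lift_le (s := lowerTriv (MagnusRing n)) ?_ ⟨g, rfl⟩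
  rintro A ⟨i, rfl⟩
  exact ⟨by simp [magnusUnit], by simp [magnusUnit]⟩

/-- The Magnus representation of the free metabelian group. -/
noncomputable def Magnus (n : ℕ) :
    FreeMetabelian n →* (Matrix (Fin 2) (Fin 2) (MagnusRing n))ˣ :=
  QuotientGroup.lift (derivedSeries (FreeGroup (Fin n)) 2) (magnusFree n)
    (derivedSeries_two_map_eq_one (magnusFree n) (magnusFree_mem_lowerTriv n))

/-- The Laurent monomial `s₁^{j₁} ⋯ sₙ^{jₙ}` with exponent vector `j`. -/
noncomputable def sMonomial (n : ℕ) (j : Fin n →₀ ℤ) : LaurentRing n :=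
  AddMonoidAlgebra.single j 1


lemma sMonomial_mul (n : ℕ) (a b : Fin n →₀ ℤ) :
    sMonomial n a * sMonomial n b = sMonomial n (a + b) := by
  rw [sMonomial, sMonomial, sMonomial, AddMonoidAlgebra.single_mul_single, one_mul]

lemma sMonomial_zero (n : ℕ) : sMonomial n 0 = 1 := by
  rw [sMonomial, AddMonoidAlgebra.one_def]

lemma sMonomial_single (n : ℕ) (i : Fin n) :
    sMonomial n (Finsupp.single i 1) = sVar n i := rfl

/-- The set of matrices of the Magnus form, as a subgroup. -/
noncomputable def magnusForm (n : ℕ) : Subgroup (Matrix (Fin 2) (Fin 2) (MagnusRing n))ˣ where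
  carrier := {A | ∃ (j : Fin n →₀ ℤ) (γ : Fin n → LaurentRing n),
      (A : Matrix (Fin 2) (Fin 2) (MagnusRing n)) =
        !![C (sMonomial n j), ∑ i : Fin n, C (γ i) * X i; 0, 1] ∧
      ∑ i : Fin n, γ i * (1 - sVar n i) = 1 - sMonomial n j}
  one_mem' := by
    refine ⟨0, 0, ?_, ?_⟩
    · simp [sMonomial_zero, Matrix.one_fin_two]
    · simp [sMonomial_zero]
  mul_mem' := by
    rintro A B ⟨j, γ, hA, hγ⟩ ⟨j', γ', hB, hγ'⟩
    set γ'' : Fin n → LaurentRing n := fun i => sMonomial n j * γ' i + γ i with hγ''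
    refine ⟨j + j', γ'', ?_, ?_⟩
    · rw [Units.val_mul, hA, hB, Matrix.mul_fin_two]
      have e00 : (C (sMonomial n j) * C (sMonomial n j')
          + (∑ i : Fin n, C (γ i) * X i) * 0 : MagnusRing n)
          = C (sMonomial n (j + j')) := by
        rw [← sMonomial_mul, map_mul]; ring
      have e01 : (C (sMonomial n j) * (∑ i : Fin n, C (γ' i) * X i)
          + (∑ i : Fin n, C (γ i) * X i) * 1 : MagnusRing n)
          = ∑ i : Fin n, C (γ'' i) * X i := by
        simp only [hγ'', map_add, map_mul, add_mul, mul_one, mul_assoc]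
        rw [Finset.sum_add_distrib, ← Finset.mul_sum]
      rw [e00, e01]
      norm_num
    · have : ∑ i : Fin n, γ'' i * (1 - sVar n i)
          = sMonomial n j * ∑ i : Fin n, γ' i * (1 - sVar n i)
            + ∑ i : Fin n, γ i * (1 - sVar n i) := by
        rw [Finset.mul_sum, ← Finset.sum_add_distrib]
        exact Finset.sum_congr rfl (fun i _ => by ring)
      rw [this, hγ, hγ', ← sMonomial_mul]
      ring
  inv_mem' := by
    rintro A ⟨j, γ, hA, hγ⟩
    have hS : sMonomial n j * sMonomial n (-j) = 1 := by
      rw [sMonomial_mul, add_neg_cancel, sMonomial_zero]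
    set γinv : Fin n → LaurentRing n := fun i => -(sMonomial n (-j) * γ i) with hγinv
    refine ⟨-j, γinv, ?_, ?_⟩
    · have hC : (C (sMonomial n j) * C (sMonomial n (-j)) : MagnusRing n) = 1 := by
        rw [← map_mul, hS, map_one]
      have hsum : ∑ i : Fin n, C (γinv i) * X i
          = -(C (sMonomial n (-j)) * ∑ i : Fin n, C (γ i) * X i) := by
        rw [Finset.mul_sum, ← Finset.sum_neg_distrib]
        refine Finset.sum_congr rfl (fun i _ => ?_)
        rw [hγinv]
        rw [map_neg, map_mul]
        ring
      set T : MagnusRing n := ∑ i : Fin n, C (γ i) * X i with hT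
      set M : Matrix (Fin 2) (Fin 2) (MagnusRing n) :=
        !![C (sMonomial n (-j)), -(C (sMonomial n (-j)) * T); 0, 1] with hM
      have hmul : A.val * M = 1 := by
        rw [hA, hM, Matrix.mul_fin_two, Matrix.one_fin_two]
        have e00 : (C (sMonomial n j) * C (sMonomial n (-j)) + T * 0 : MagnusRing n) = 1 := by
          linear_combination hC
        have e01 : (C (sMonomial n j) * -(C (sMonomial n (-j)) * T) + T * 1 :
            MagnusRing n) = 0 := by
          linear_combination (-T : MagnusRing n) * hC
        rw [e00, e01]
        norm_num
      have h1 : (A⁻¹ : (Matrix (Fin 2) (Fin 2) (MagnusRing n))ˣ).val * A.val = 1 := by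
        rw [← Units.val_mul, inv_mul_cancel, Units.val_one]
      have hinv : (A⁻¹ : (Matrix (Fin 2) (Fin 2) (MagnusRing n))ˣ).val = M := by
        calc (A⁻¹).val = (A⁻¹).val * (A.val * M) := by rw [hmul, mul_one]
          _ = ((A⁻¹).val * A.val) * M := (mul_assoc _ _ _).symm
          _ = M := by rw [h1, one_mul]
      rw [hinv, hM, hsum]
    · have hsplit : ∑ i : Fin n, γinv i * (1 - sVar n i)
          = -(sMonomial n (-j) * ∑ i : Fin n, γ i * (1 - sVar n i)) := by
        rw [Finset.mul_sum, ← Finset.sum_neg_distrib]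
        exact Finset.sum_congr rfl (fun i _ => by rw [hγinv]; ring)
      rw [hsplit, hγ]
      linear_combination hS

lemma magnusUnit_mem_magnusForm (n : ℕ) (i : Fin n) : magnusUnit n i ∈ magnusForm n := by
  refine ⟨Finsupp.single i 1, Pi.single i 1, ?_, ?_⟩
  · have : ∑ k : Fin n, C (Pi.single (M := fun _ => LaurentRing n) i 1 k) * X k
        = (X i : MagnusRing n) := by
      rw [Finset.sum_eq_single i]
      · simp
      · intro b _ hb; simp [Pi.single_eq_of_ne hb]
      · simp
    rw [this, sMonomial_single]
    rfl
  · rw [Finset.sum_eq_single i]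
    · simp [sMonomial_single]
    · intro b _ hb; simp [Pi.single_eq_of_ne hb]
    · simp

/-- Every element in the image of the Magnus representation is a matrix of the form
`[[S, Σᵢ γᵢ tᵢ], [0, 1]]`, with `S` a Laurent monomial in the `sᵢ` and the `γᵢ` Laurent
polynomials in the `sᵢ` satisfying `Σᵢ γᵢ (1 - sᵢ) = 1 - S`. -/
theorem magnus_image_form (n : ℕ) (g : FreeMetabelian n) :
    ∃ (j : Fin n →₀ ℤ) (γ : Fin n → LaurentRing n),
      (Magnus n g : Matrix (Fin 2) (Fin 2) (MagnusRing n)) =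
        !![C (sMonomial n j), ∑ i : Fin n, C (γ i) * X i; 0, 1] ∧
      ∑ i : Fin n, γ i * (1 - sVar n i) = 1 - sMonomial n j := by
  induction g using QuotientGroup.induction_on with
  | H x =>
    have hx : magnusFree n x ∈ magnusForm n := by
      refine FreeGroup.range_lift_le (s := magnusForm n) ?_ ⟨x, rfl⟩
      rintro A ⟨i, rfl⟩
      exact magnusUnit_mem_magnusForm n i
    have : Magnus n (QuotientGroup.mk x) = magnusFree n x := rfl
    rw [this]
    exact hx
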